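/- Let G = F_p^m (elementary abelian p-group), p an odd prime, 1 ≤ k ≤ p^m. The incidence structure (G, B_k^x) is a 1-design if and only if either (p | k, k ≠ p^m, and x arbitrary) or (k = p^m and x = 0). -/

import Mathlib

open Finset

/-- The family of `k`-element subsets of `G` whose elements sum to `x`. -/
def sumBlocks (G : Type) [AddCommGroup G] [Fintype G] [DecidableEq G]
    (k : ℕ) (x : G) : Finset (Finset G) :=
  Finset.univ.filter (fun T => T.card = k ∧ T.sum id = x)

/-- The family of `k`-element subsets of `G \ {0}` whose elements sum to `x`. -/
def sumBlocksStar (G : Type) [AddCommGroup G] [Fintype G] [DecidableEq G]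
    (k : ℕ) (x : G) : Finset (Finset G) :=
  Finset.univ.filter (fun T => T.card = k ∧ T.sum id = x ∧ (0 : G) ∉ T)

/-- `(G, B_k^x)` is a 1-design: the block family is nonempty and every
point of `G` lies in the same number of blocks. -/
def isOneDesign (G : Type) [AddCommGroup G] [Fintype G] [DecidableEq G]
    (k : ℕ) (x : G) : Prop :=
  sumBlocks G k x ≠ ∅ ∧ ∃ r : ℕ, ∀ y : G,
    ((sumBlocks G k x).filter (fun B => y ∈ B)).card = r

/-- `e(x) = max {d : d ∣ exp(G), x ∈ dG}`. -/
noncomputable def eMax (G : Type) [AddCommGroup G] [Fintype G] [DecidableEq G] (x : G) : ℕ :=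
  Nat.findGreatest (fun d => d ∣ AddMonoid.exponent G ∧ ∃ y : G, d • y = x)
    (AddMonoid.exponent G)

/-! ### Auxiliary lemmas -/

lemma aux_sum_univ_eq_zero_of_no_two_torsion {A : Type} [AddCommGroup A] [Fintype A]
    (h2 : ∀ a : A, a + a = 0 → a = 0) : ∑ a : A, a = 0 := by
  apply h2
  have h : ∑ a : A, a = ∑ a : A, -a :=
    (Fintype.sum_equiv (Equiv.neg A) _ _ (by simp))
  nth_rewrite 2 [h]
  rw [← Finset.sum_add_distrib]
  simp

lemma aux_zmod_two_torsion (p : ℕ) (hp : p.Prime) (hodd : Odd p) (a : ZMod p) (h : a + a = 0) :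
    a = 0 := by
  haveI := Fact.mk hp
  have h2 : (2 : ZMod p) * a = 0 := by rw [two_mul]; exact h
  have h3 : (2 : ZMod p) ≠ 0 := by
    have hd : ¬ (p ∣ 2) := by
      intro hd
      have := (Nat.prime_dvd_prime_iff_eq hp Nat.prime_two).mp hd
      subst this
      exact (Nat.not_even_iff_odd.mpr hodd) even_two
    intro h0
    apply hd
    rwa [show (2 : ZMod p) = ((2:ℕ) : ZMod p) by push_cast; ring,
      ZMod.natCast_eq_zero_iff] at h0
  exact (mul_eq_zero.mp h2).resolve_left h3

lemma aux_zmod_sum_univ (p : ℕ) [NeZero p] (hp : p.Prime) (hodd : Odd p) :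
    ∑ a : ZMod p, a = 0 :=
  aux_sum_univ_eq_zero_of_no_two_torsion (aux_zmod_two_torsion p hp hodd)

lemma aux_pi_sum_univ (p m : ℕ) [NeZero p] (hp : p.Prime) (hodd : Odd p) :
    ∑ g : Fin m → ZMod p, g = 0 :=
  aux_sum_univ_eq_zero_of_no_two_torsion
    (fun g h => funext fun i => aux_zmod_two_torsion p hp hodd (g i) (congrFun h i))

lemma aux_smul_eq_zero_of_dvd (p m k : ℕ) [NeZero p] (hpk : p ∣ k) (g : Fin m → ZMod p) :
    k • g = 0 := by
  obtain ⟨q, rfl⟩ := hpk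
  rw [mul_comm, mul_smul]
  convert smul_zero q
  funext i
  simp [Pi.smul_apply, nsmul_eq_mul, ZMod.natCast_self]

lemma aux_card_pi (p m : ℕ) [NeZero p] : Fintype.card (Fin m → ZMod p) = p ^ m := by
  simp [ZMod.card]

lemma mem_sumBlocks {G : Type} [AddCommGroup G] [Fintype G] [DecidableEq G]
    {k : ℕ} {x : G} {T : Finset G} :
    T ∈ sumBlocks G k x ↔ T.card = k ∧ T.sum id = x := by
  simp [sumBlocks]

lemma aux_image_translate_facts {G : Type} [AddCommGroup G] [DecidableEq G]
    (B : Finset G) (h : G) : (B.image (· + h)).card = B.card ∧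
      (B.image (· + h)).sum id = B.sum id + B.card • h ∧
      ∀ z : G, z + h ∈ B.image (· + h) ↔ z ∈ B := by
  have hinj : Function.Injective (· + h) := add_left_injective h
  refine ⟨Finset.card_image_of_injective _ hinj, ?_, ?_⟩
  · rw [Finset.sum_image (fun a _ b _ hab => hinj hab)]
    simp only [id_eq]
    rw [Finset.sum_add_distrib, Finset.sum_const]
  · intro z
    constructor
    · intro hz
      obtain ⟨w, hw, hwe⟩ := Finset.mem_image.mp hz
      rwa [← hinj hwe]
    · intro hz; exact Finset.mem_image.mpr ⟨z, hz, rfl⟩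

lemma aux_translate_count {G : Type} [AddCommGroup G] [Fintype G] [DecidableEq G]
    (k : ℕ) (x y g : G) :
    ((sumBlocks G k x).filter (fun B => y ∈ B)).card
      = ((sumBlocks G k (x + k • g)).filter (fun B => (y + g) ∈ B)).card := by
  apply Finset.card_nbij' (fun B => B.image (· + g)) (fun B => B.image (· + (-g)))
  · intro B hB
    simp only [Finset.mem_coe, Finset.mem_filter] at hB ⊢
    obtain ⟨hB1, hB2⟩ := hB
    obtain ⟨hc, hs⟩ := mem_sumBlocks.mp hB1
    exact ⟨mem_sumBlocks.mpr ⟨by rw [(aux_image_translate_facts B g).1, hc],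
      by rw [(aux_image_translate_facts B g).2.1, hc, hs]⟩,
      ((aux_image_translate_facts B g).2.2 y).mpr hB2⟩
  · intro B hB
    simp only [Finset.mem_coe, Finset.mem_filter] at hB ⊢
    obtain ⟨hB1, hB2⟩ := hB
    obtain ⟨hc, hs⟩ := mem_sumBlocks.mp hB1
    refine ⟨mem_sumBlocks.mpr ⟨by rw [(aux_image_translate_facts B (-g)).1, hc], ?_⟩, ?_⟩
    · rw [(aux_image_translate_facts B (-g)).2.1, hc, hs, smul_neg]
      abel
    · have h2 : y + g + -g = y := by abel
      rw [← h2]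
      exact ((aux_image_translate_facts B (-g)).2.2 (y + g)).mpr hB2
  · intro B hB
    ext z
    simp only [Finset.mem_image]
    constructor
    · rintro ⟨w, ⟨u, hu, rfl⟩, rfl⟩
      simpa using hu
    · intro hz
      exact ⟨z + g, ⟨z, hz, rfl⟩, by abel⟩
  · intro B hB
    ext z
    simp only [Finset.mem_image]
    constructor
    · rintro ⟨w, ⟨u, hu, rfl⟩, rfl⟩
      simpa using hu
    · intro hz
      exact ⟨z + -g, ⟨z, hz, rfl⟩, by abel⟩

lemma aux_count_through_zero_total (G : Type) [AddCommGroup G] [Fintype G] [DecidableEq G]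
    (k : ℕ) (hk : 1 ≤ k) :
    ∑ x' : G, ((sumBlocks G k x').filter (fun B => (0:G) ∈ B)).card
      = (Fintype.card G - 1).choose (k-1) := by
  classical
  set A : Finset (Finset G) := univ.filter (fun T => T.card = k ∧ (0:G) ∈ T) with hA
  have h1 : ∀ x' : G, (sumBlocks G k x').filter (fun B => (0:G) ∈ B)
      = A.filter (fun T => T.sum id = x') := by
    intro x'
    ext T
    simp only [sumBlocks, hA, Finset.mem_filter, Finset.mem_univ, true_and]
    tauto
  have h2 : ∑ x' : G, ((sumBlocks G k x').filter (fun B => (0:G) ∈ B)).card = A.card := by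
    simp only [h1, Finset.card_filter]
    rw [Finset.sum_comm, Finset.card_eq_sum_ones A]
    apply Finset.sum_congr rfl
    intro T _
    simp
  rw [h2]
  have h3 : A.card = ((univ.erase (0:G)).powersetCard (k-1)).card := by
    apply Finset.card_nbij' (fun T => T.erase 0) (fun T => insert 0 T)
    · intro T hT
      simp only [hA, Finset.mem_coe, Finset.mem_filter, Finset.mem_univ, true_and] at hT
      rw [Finset.mem_coe, Finset.mem_powersetCard]
      constructor
      · intro a ha
        simp only [Finset.mem_erase] at ha ⊢
        exact ⟨ha.1, Finset.mem_univ a⟩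
      · rw [Finset.card_erase_of_mem hT.2, hT.1]
    · intro T hT
      rw [Finset.mem_coe, Finset.mem_powersetCard] at hT
      simp only [hA, Finset.mem_coe, Finset.mem_filter, Finset.mem_univ, true_and]
      have h0 : (0:G) ∉ T := fun h => (Finset.mem_erase.mp (hT.1 h)).1 rfl
      constructor
      · rw [Finset.card_insert_of_notMem h0, hT.2]
        omega
      · exact Finset.mem_insert_self _ _
    · intro T hT
      simp only [hA, Finset.mem_coe, Finset.mem_filter, Finset.mem_univ, true_and] at hT
      exact Finset.insert_erase hT.2
    · intro T hT
      rw [Finset.mem_coe, Finset.mem_powersetCard] at hT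
      have h0 : (0:G) ∉ T := fun h => (Finset.mem_erase.mp (hT.1 h)).1 rfl
      exact Finset.erase_insert h0
  rw [h3, Finset.card_powersetCard, Finset.card_erase_of_mem (Finset.mem_univ _),
    Finset.card_univ]

lemma aux_not_dvd_choose_pow_sub_one (p m : ℕ) (hp : p.Prime) (j : ℕ) (hj : j ≤ p^m - 1) :
    ¬ p ∣ (p^m - 1).choose j := by
  induction j with
  | zero =>
    simp only [Nat.choose_zero_right, Nat.dvd_one]
    exact hp.one_lt.ne'
  | succ j ih =>
    have hj' : j ≤ p ^ m - 1 := by omega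
    have hpm : 1 ≤ p ^ m := Nat.one_le_pow _ _ hp.pos
    have hpascal : (p^m - 1).choose j + (p^m - 1).choose (j+1) = (p^m).choose (j+1) := by
      conv_rhs => rw [show p^m = (p^m -1)+1 by omega, Nat.choose_succ_succ]
    have hdvd : p ∣ (p^m).choose (j+1) := by
      apply hp.dvd_choose_pow (by omega)
      intro h
      omega
    intro hcontra
    apply ih hj'
    have := Nat.dvd_sub hdvd hcontra
    rwa [← hpascal, Nat.add_sub_cancel] at this

lemma aux_exists_subset_card_sum (p m k : ℕ) [NeZero p] (hp : p.Prime) (hodd : Odd p)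
    (hpk : p ∣ k) (hk1 : 1 ≤ k) (hkn : k < p ^ m) (x : Fin m → ZMod p) :
    ∃ T : Finset (Fin m → ZMod p), T.card = k ∧ T.sum id = x := by
  classical
  obtain ⟨q, hq⟩ := hpk
  have hq1 : 1 ≤ q := by
    rcases Nat.eq_zero_or_pos q with h | h
    · subst h; omega
    · exact h
  have hple : p ≤ k := by
    calc p = p * 1 := by ring
    _ ≤ p * q := Nat.mul_le_mul_left p hq1
    _ = k := hq.symm
  have hm : 2 ≤ m := by
    by_contra h
    push_neg at h
    interval_cases m
    · simp at hkn; omega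
    · simp at hkn; omega
  have hqlt : q < p ^ (m-1) := by
    have h1 : p ^ m = p ^ (m-1) * p := by
      rw [← pow_succ]; congr 1; omega
    rw [hq, h1, mul_comm (p^(m-1)) p] at hkn
    exact Nat.lt_of_mul_lt_mul_left hkn
  have hj : ∃ j : Fin m, x ≠ 0 → ∀ a : ZMod p, x ≠ a • (Pi.single j 1 : Fin m → ZMod p) := by
    set j0 : Fin m := ⟨0, by omega⟩
    set j1 : Fin m := ⟨1, by omega⟩
    have hj01 : j0 ≠ j1 := by simp [j0, j1, Fin.ext_iff]
    by_cases hc : ∃ a : ZMod p, x = a • (Pi.single j0 1 : Fin m → ZMod p)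
    · refine ⟨j1, fun hx a hxa => hx ?_⟩
      obtain ⟨b, hb⟩ := hc
      have h1 : x j1 = 0 := by
        rw [hb]; simp [Pi.single_eq_of_ne (Ne.symm hj01)]
      have h2 : x j1 = a := by
        rw [hxa]; simp [Pi.single_eq_same]
      rw [hxa, show a = 0 by rw [← h2, h1]]
      simp
    · push_neg at hc
      exact ⟨j0, fun _ => hc⟩
  obtain ⟨j, hj⟩ := hj
  set v : Fin m → ZMod p := Pi.single j (1 : ZMod p) with hv
  have hv1 : ∀ a : ZMod p, (a • v) j = a := by
    intro a; simp [hv, Pi.single_eq_same]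
  have hv2 : ∀ (w : Fin m → ZMod p) (a : ZMod p), w j = 0 → (w + a • v) j = a := by
    intro w a hw; simp [Pi.add_apply, hw, hv1]
  set W : Finset (Fin m → ZMod p) := univ.filter (fun g => g j = 0) with hW
  set ρ : (Fin m → ZMod p) → (Fin m → ZMod p) := fun g => g - (g j) • v with hρ
  have hρW : ∀ g, ρ g ∈ W := by
    intro g
    simp only [hW, Finset.mem_filter, Finset.mem_univ, true_and, hρ]
    simp [Pi.sub_apply, hv1]
  have hρdecomp : ∀ g, ρ g + (g j) • v = g := by
    intro g; simp [hρ]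
  have huniq : ∀ (w : Fin m → ZMod p) (a : ZMod p), w j = 0 → ρ (w + a • v) = w := by
    intro w a hw
    have h1 : (w + a • v) j = a := hv2 w a hw
    simp only [hρ, h1]
    abel
  have hWcard : W.card = p ^ (m-1) := by
    have hbij : ((univ : Finset (ZMod p)) ×ˢ W).card = (univ : Finset (Fin m → ZMod p)).card := by
      apply Finset.card_nbij' (fun aw => aw.2 + aw.1 • v) (fun g => (g j, ρ g))
      · intro a _; exact Finset.mem_univ _
      · intro g _
        simp only [Finset.mem_coe, Finset.mem_product]
        exact ⟨Finset.mem_univ _, hρW g⟩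
      · intro aw haw
        simp only [Finset.mem_coe, Finset.mem_product, hW, Finset.mem_filter] at haw
        have h1 := hv2 aw.2 aw.1 haw.2.2
        have h2 := huniq aw.2 aw.1 haw.2.2
        beta_reduce
        rw [h1, h2]
      · intro g _
        exact hρdecomp g
    rw [Finset.card_product, Finset.card_univ, Finset.card_univ, ZMod.card] at hbij
    have hGcard : Fintype.card (Fin m → ZMod p) = p ^ m := by simp [ZMod.card]
    rw [hGcard] at hbij
    have h1 : p ^ m = p * p ^ (m-1) := by
      rw [← pow_succ']; congr 1; omega
    rw [h1] at hbij
    exact Nat.eq_of_mul_eq_mul_left hp.pos hbij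
  set wx := ρ x with hwx
  have hVex : q - 1 ≤ ((W.erase wx).erase 0).card := by
    have h1 := Finset.pred_card_le_card_erase (s := W.erase wx) (a := (0 : Fin m → ZMod p))
    have h2 := Finset.pred_card_le_card_erase (s := W) (a := wx)
    omega
  obtain ⟨V, hVsub, hVcard⟩ := Finset.exists_subset_card_eq hVex
  set W' : Finset (Fin m → ZMod p) := insert 0 V with hW'
  have h0V : (0 : Fin m → ZMod p) ∉ V := by
    intro h
    exact (Finset.mem_erase.mp (hVsub h)).1 rfl
  have hW'card : W'.card = q := by
    rw [hW', Finset.card_insert_of_notMem h0V, hVcard]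
    omega
  have hW'sub : ∀ w ∈ W', w j = 0 := by
    intro w hw
    rcases Finset.mem_insert.mp hw with h | h
    · rw [h]; rfl
    · have := Finset.mem_of_mem_erase (Finset.mem_of_mem_erase (hVsub h))
      simpa [hW] using this
  have hwxW' : x ≠ 0 → wx ∉ W' := by
    intro hx hmem
    have hwx0 : wx ≠ 0 := by
      intro h
      apply hj hx (x j)
      have := hρdecomp x
      rw [← hwx, h, zero_add] at this
      exact this.symm
    rcases Finset.mem_insert.mp hmem with h | h
    · exact hwx0 h
    · exact (Finset.mem_erase.mp (Finset.mem_of_mem_erase (hVsub h))).1 rfl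
  set S0 : Finset (Fin m → ZMod p) :=
    W'.biUnion (fun w => (univ : Finset (ZMod p)).image (fun a => w + a • v)) with hS0
  have hdisj : ∀ w₁ ∈ W', ∀ w₂ ∈ W', w₁ ≠ w₂ →
      Disjoint ((univ : Finset (ZMod p)).image (fun a => w₁ + a • v))
        ((univ : Finset (ZMod p)).image (fun a => w₂ + a • v)) := by
    intro w₁ h₁ w₂ h₂ hne
    rw [Finset.disjoint_left]
    intro g hg1 hg2
    obtain ⟨a, _, ha⟩ := Finset.mem_image.mp hg1
    obtain ⟨b, _, hb⟩ := Finset.mem_image.mp hg2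
    apply hne
    calc w₁ = ρ (w₁ + a • v) := (huniq w₁ a (hW'sub w₁ h₁)).symm
    _ = ρ (w₂ + b • v) := by rw [ha, hb]
    _ = w₂ := huniq w₂ b (hW'sub w₂ h₂)
  have hinj : ∀ w : Fin m → ZMod p, w j = 0 →
      Function.Injective (fun a : ZMod p => w + a • v) := by
    intro w hw a b hab
    have := congrArg (fun g => g j) hab
    simpa [hv2 w a hw, hv2 w b hw] using this
  have hS0card : S0.card = q * p := by
    rw [hS0, Finset.card_biUnion hdisj]
    have : ∀ w ∈ W', ((univ : Finset (ZMod p)).image (fun a => w + a • v)).card = p := by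
      intro w hw
      rw [Finset.card_image_of_injective _ (hinj w (hW'sub w hw)), Finset.card_univ, ZMod.card]
    rw [Finset.sum_congr rfl this, Finset.sum_const, hW'card, smul_eq_mul]
  have hS0sum : S0.sum id = 0 := by
    rw [hS0, Finset.sum_biUnion]
    · apply Finset.sum_eq_zero
      intro w hw
      rw [Finset.sum_image (fun a _ b _ hab => hinj w (hW'sub w hw) hab)]
      simp only [id_eq]
      rw [Finset.sum_add_distrib, Finset.sum_const, Finset.card_univ, ZMod.card,
        ← Finset.sum_smul, aux_zmod_sum_univ p hp hodd, zero_smul,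
        aux_smul_eq_zero_of_dvd p m p (dvd_refl p), add_zero]
    · intro w₁ h₁ w₂ h₂ hne
      exact hdisj w₁ h₁ w₂ h₂ hne
  have h0S0 : (0 : Fin m → ZMod p) ∈ S0 := by
    rw [hS0, Finset.mem_biUnion]
    refine ⟨0, Finset.mem_insert_self _ _, ?_⟩
    rw [Finset.mem_image]
    exact ⟨0, Finset.mem_univ _, by simp⟩
  have hxS0 : x ≠ 0 → x ∉ S0 := by
    intro hx hmem
    rw [hS0, Finset.mem_biUnion] at hmem
    obtain ⟨w, hw, hmem⟩ := hmem
    obtain ⟨a, _, ha⟩ := Finset.mem_image.mp hmem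
    apply hwxW' hx
    have : wx = w := by
      rw [hwx, ← ha, huniq w a (hW'sub w hw)]
    rwa [this]
  have hxE : x ∉ S0.erase 0 := by
    by_cases hx : x = 0
    · rw [hx]; exact Finset.notMem_erase _ _
    · intro h
      exact hxS0 hx (Finset.mem_of_mem_erase h)
  refine ⟨insert x (S0.erase 0), ?_, ?_⟩
  · rw [Finset.card_insert_of_notMem hxE, Finset.card_erase_of_mem h0S0, hS0card]
    have hk' : q * p = k := by rw [hq, mul_comm]
    omega
  · rw [Finset.sum_insert hxE, Finset.sum_erase _ (by simp : (id (0 : Fin m → ZMod p)) = 0),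
      hS0sum, add_zero]
    simp

theorem stmt6 (p m : ℕ) (hp : p.Prime) (hodd : Odd p) [NeZero p]
    (k : ℕ) (hk1 : 1 ≤ k) (hkn : k ≤ p ^ m)
    (x : Fin m → ZMod p) :
    isOneDesign (Fin m → ZMod p) k x ↔
      ((p ∣ k ∧ k ≠ p ^ m) ∨ (k = p ^ m ∧ x = 0)) := by
  haveI := Fact.mk hp
  constructor
  · rintro ⟨hne, r, hr⟩
    by_cases hkpm : k = p ^ m
    · right
      refine ⟨hkpm, ?_⟩
      obtain ⟨T, hT⟩ := Finset.nonempty_iff_ne_empty.mpr hne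
      obtain ⟨hc, hs⟩ := mem_sumBlocks.mp hT
      have hTuniv : T = univ := Finset.eq_univ_of_card T (by rw [hc, hkpm, aux_card_pi])
      rw [← hs, hTuniv]
      simpa [id] using aux_pi_sum_univ p m hp hodd
    · left
      refine ⟨?_, hkpm⟩
      by_contra hpk
      have hm1 : 1 ≤ m := by
        by_contra h
        push_neg at h
        interval_cases m
        simp at hkn hkpm
        omega
      have hc : ((k : ZMod p)) ≠ 0 := by
        rwa [Ne, ZMod.natCast_eq_zero_iff]
      have hstep1 : ∀ x' : Fin m → ZMod p,
          ((sumBlocks (Fin m → ZMod p) k x').filter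
            (fun B => (0 : Fin m → ZMod p) ∈ B)).card = r := by
        intro x'
        set y : Fin m → ZMod p := (k : ZMod p)⁻¹ • (x - x') with hy
        have hky : k • y = x - x' := by
          funext i
          rw [Pi.smul_apply, nsmul_eq_mul, hy, Pi.smul_apply, smul_eq_mul, ← mul_assoc,
            mul_inv_cancel₀ hc, one_mul]
        have htc := aux_translate_count k x y (-y)
        have h1 : y + -y = (0 : Fin m → ZMod p) := by abel
        have h2 : x + k • (-y) = x' := by
          rw [smul_neg, hky]; abel
        rw [h1, h2] at htc
        rw [← htc]
        exact hr y
      have hstep2 := aux_count_through_zero_total (Fin m → ZMod p) k hk1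
      rw [Finset.sum_congr rfl (fun x' _ => hstep1 x'), Finset.sum_const, Finset.card_univ,
        aux_card_pi, smul_eq_mul] at hstep2
      have hdvd : p ∣ p ^ m * r := Dvd.dvd.mul_right (dvd_pow_self p (by omega)) r
      rw [hstep2] at hdvd
      exact aux_not_dvd_choose_pow_sub_one p m hp (k-1)
        (by have := Nat.one_le_pow m p hp.pos; omega) hdvd
  · rintro (⟨hpk, hkpm⟩ | ⟨hkpm, hx0⟩)
    · have hkn' : k < p ^ m := lt_of_le_of_ne hkn hkpm
      obtain ⟨T, hTc, hTs⟩ := aux_exists_subset_card_sum p m k hp hodd hpk hk1 hkn' x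
      constructor
      · intro h
        have hmem : T ∈ sumBlocks (Fin m → ZMod p) k x := mem_sumBlocks.mpr ⟨hTc, hTs⟩
        rw [h] at hmem
        exact absurd hmem (Finset.notMem_empty T)
      · refine ⟨((sumBlocks (Fin m → ZMod p) k x).filter
          (fun B => (0 : Fin m → ZMod p) ∈ B)).card, fun y => ?_⟩
        have htc := aux_translate_count k x (0 : Fin m → ZMod p) y
        rw [aux_smul_eq_zero_of_dvd p m k hpk y, add_zero, zero_add] at htc
        exact htc.symm
    · subst hkpm
      subst hx0
      have huniv_mem : (univ : Finset (Fin m → ZMod p)) ∈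
          sumBlocks (Fin m → ZMod p) (p^m) 0 := by
        refine mem_sumBlocks.mpr ⟨by rw [Finset.card_univ, aux_card_pi], ?_⟩
        simpa [id] using aux_pi_sum_univ p m hp hodd
      have hblocks : sumBlocks (Fin m → ZMod p) (p^m) 0 = {univ} := by
        ext T
        simp only [Finset.mem_singleton]
        constructor
        · intro hT
          obtain ⟨hc', _⟩ := mem_sumBlocks.mp hT
          exact Finset.eq_univ_of_card T (by rw [hc', aux_card_pi])
        · rintro rfl
          exact huniv_mem
      constructor
      · rw [hblocks]
        simp
      · refine ⟨1, fun y => ?_⟩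
        rw [hblocks, Finset.filter_singleton]
        simp
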